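/- arXiv:1302.5567 — 2 statements merged into one kernel-verified Lean document; each statement's English description precedes it below -/
import Mathlib

section
/- Let n ≥ 3, 0 < α < n, and p, q > 0 with pq > 1 and p ≤ q. If 1/(p+1) + 1/(q+1) ≤ (n-α)/n, then q - (qα/n)·((p+1)(q-1)/(pq-1)) - α/n > α(q-p)/(n(pq-1)). -/
theorem stmt3 (n α p q : ℝ) (hn : 3 ≤ n) (hα : 0 < α) (hαn : α < n)
    (hp : 0 < p) (hq : 0 < q) (hpq : 1 < p * q) (hple : p ≤ q)
    (hncc : 1 / (p + 1) + 1 / (q + 1) ≤ (n - α) / n) :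
    q - (q * α / n) * ((p + 1) * (q - 1) / (p * q - 1)) - α / n
      > α * (q - p) / (n * (p * q - 1)) := by
  have hn0 : (0:ℝ) < n := by linarith
  have hd : (0:ℝ) < p * q - 1 := by linarith
  have hq1 : 1 < q := by nlinarith
  have hp1 : (0:ℝ) < p + 1 := by linarith
  have hq1' : (0:ℝ) < q + 1 := by linarith
  have key : α * ((p + 1) * (q + 1)) ≤ n * (p * q - 1) := by
    have h := hncc
    rw [div_add_div _ _ (ne_of_gt hp1) (ne_of_gt hq1'), div_le_div_iff₀ (by positivity) hn0] at h
    nlinarith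
  have hstrict : α * ((p + 1) * (q + 1)) * (q - 1) < n * (p * q - 1) * q := by
    nlinarith
  rw [gt_iff_lt, ← sub_pos]
  have heq : q - (q * α / n) * ((p + 1) * (q - 1) / (p * q - 1)) - α / n
      - α * (q - p) / (n * (p * q - 1))
      = (n * (p * q - 1) * q - α * ((p + 1) * (q + 1)) * (q - 1)) / (n * (p * q - 1)) := by
    have h1 := hd.ne'
    generalize hD : p * q - 1 = D at h1 ⊢
    field_simp
    rw [← hD]
    ring
  rw [heq]
  exact div_pos (by linarith) (by positivity)
end

section
/- Let n ≥ 3, 0 < α < n, p > 0, and suppose (n-α)p < n, n - α < n, and (n-α)(p+1) > n. Then the integral ∫_{ℝⁿ} |z|^{-(n-α)p} |e - z|^{-(n-α)} dz is finite, where e is any fixed unit vector in ℝⁿ. -/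
open MeasureTheory

open Measure Set Metric
open scoped ENNReal

local notation "dim" => Module.finrank ℝ

section Aux

variable {E : Type*} [NormedAddCommGroup E] [NormedSpace ℝ E]
  [MeasurableSpace E] [BorelSpace E] [FiniteDimensional ℝ E] [Nontrivial E]
  (μ : Measure E) [μ.IsAddHaarMeasure]

lemma lintegral_fun_norm_addHaar (g : ℝ → ℝ≥0∞) (hg : Measurable g) :
    ∫⁻ x, g ‖x‖ ∂μ
      = μ.toSphere univ * ∫⁻ y in Ioi (0:ℝ), ENNReal.ofReal (y ^ (dim E - 1)) * g y := by
  calc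
    ∫⁻ x, g ‖x‖ ∂μ = ∫⁻ x : ({(0:E)}ᶜ : Set E), g ‖x.1‖ ∂(μ.comap (↑)) := by
      rw [lintegral_subtype_comap (measurableSet_singleton (0:E)).compl (fun x => g ‖x‖),
        restrict_compl_singleton]
    _ = ∫⁻ x : sphere (0:E) 1 × Ioi (0:ℝ), g x.2
          ∂(μ.toSphere.prod (.volumeIoiPow (dim E - 1))) :=
by
      rw [← μ.measurePreserving_homeomorphUnitSphereProd.lintegral_comp_emb
        (Homeomorph.measurableEmbedding _) (fun x => g x.2)]
      congr 1; ext x; simp [homeomorphUnitSphereProd, homeomorphSphereProd]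
    _ = μ.toSphere univ * ∫⁻ y : Ioi (0:ℝ), g y ∂(Measure.volumeIoiPow (dim E - 1)) := by
      rw [lintegral_prod (fun z : sphere (0:E) 1 × Ioi (0:ℝ) => g z.2)
        ((hg.comp measurable_subtype_coe).comp measurable_snd).aemeasurable]
      simp [lintegral_const, mul_comm]
    _ = _ := by
      congr 1
      rw [Measure.volumeIoiPow,
        lintegral_withDensity_eq_lintegral_mul _
          (f := fun r : Ioi (0:ℝ) => ENNReal.ofReal (r.1 ^ (dim E - 1)))
          ((measurable_subtype_coe.pow_const _).ennreal_ofReal)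
          (show Measurable (fun y : Ioi (0:ℝ) => g ↑y) from hg.comp measurable_subtype_coe),
        ← lintegral_subtype_comap measurableSet_Ioi
          (fun y => ENNReal.ofReal (y ^ (dim E - 1)) * g y)]
      rfl

lemma lintegral_rpow_norm_ball_lt_top {s : ℝ} (hs : -(dim E : ℝ) < s) {R : ℝ} (hR : 0 < R) :
    ∫⁻ z in ball (0:E) R, ENNReal.ofReal (‖z‖ ^ s) ∂μ < ⊤ := by
  have hd : 0 < dim E := Module.finrank_pos
  set g : ℝ → ℝ≥0∞ := (Iio R).indicator (fun y => ENNReal.ofReal (y ^ s)) with hgdef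
  have hgm : Measurable g :=
    Measurable.indicator (by fun_prop) measurableSet_Iio
  have h1 : ∫⁻ z in ball (0:E) R, ENNReal.ofReal (‖z‖ ^ s) ∂μ = ∫⁻ z, g ‖z‖ ∂μ := by
    rw [← lintegral_indicator measurableSet_ball]
    congr 1; ext z
    by_cases hz : z ∈ ball (0:E) R
    · rw [Set.indicator_of_mem hz, hgdef,
        Set.indicator_of_mem (by simpa [mem_ball_zero_iff] using hz)]
    · rw [Set.indicator_of_notMem hz, hgdef,
        Set.indicator_of_notMem (by simpa [mem_ball_zero_iff] using hz)]
  rw [h1, lintegral_fun_norm_addHaar μ g hgm]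
  refine ENNReal.mul_lt_top (measure_lt_top _ _) ?_
  have h2 : ∫⁻ y in Ioi (0:ℝ), ENNReal.ofReal (y ^ (dim E - 1)) * g y
      = ∫⁻ y in Ioo (0:ℝ) R, ENNReal.ofReal (y ^ ((dim E - 1 : ℝ) + s)) := by
    rw [← lintegral_indicator measurableSet_Ioi, ← lintegral_indicator measurableSet_Ioo]
    congr 1; ext y
    by_cases hy : y ∈ Ioo (0:ℝ) R
    · rw [Set.indicator_of_mem hy, Set.indicator_of_mem (mem_Ioi.2 hy.1), hgdef,
        Set.indicator_of_mem (mem_Iio.2 hy.2),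
        ← ENNReal.ofReal_mul (pow_nonneg hy.1.le _)]
      congr 1
      rw [Real.rpow_add hy.1, ← Real.rpow_natCast y (dim E - 1),
        Nat.cast_sub (by omega : 1 ≤ dim E), Nat.cast_one]
    · by_cases hy0 : y ∈ Ioi (0:ℝ)
      · have hyR : ¬ y ∈ Iio R := fun h => hy ⟨hy0, h⟩
        rw [Set.indicator_of_notMem hy, Set.indicator_of_mem hy0, hgdef,
          Set.indicator_of_notMem hyR, mul_zero]
      · rw [Set.indicator_of_notMem hy, Set.indicator_of_notMem hy0]
  rw [h2]
  have hI : IntegrableOn (fun y : ℝ => y ^ ((dim E - 1 : ℝ) + s)) (Ioo 0 R) := by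
    rw [intervalIntegral.integrableOn_Ioo_rpow_iff hR]
    have : (1:ℝ) ≤ (dim E : ℝ) := by exact_mod_cast hd
    linarith
  calc ∫⁻ y in Ioo (0:ℝ) R, ENNReal.ofReal (y ^ ((dim E - 1 : ℝ) + s))
      ≤ ∫⁻ y in Ioo (0:ℝ) R, ‖y ^ ((dim E - 1 : ℝ) + s)‖ₑ :=
        lintegral_ofReal_le_lintegral_enorm _
    _ < ⊤ := hI.2

lemma lintegral_rpow_norm_compl_lt_top {s : ℝ} (hs : s < -(dim E : ℝ)) {R : ℝ} (hR : 0 < R) :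
    ∫⁻ z in (closedBall (0:E) R)ᶜ, ENNReal.ofReal (‖z‖ ^ s) ∂μ < ⊤ := by
  have hd : 0 < dim E := Module.finrank_pos
  set g : ℝ → ℝ≥0∞ := (Ioi R).indicator (fun y => ENNReal.ofReal (y ^ s)) with hgdef
  have hgm : Measurable g :=
    Measurable.indicator (by fun_prop) measurableSet_Ioi
  have h1 : ∫⁻ z in (closedBall (0:E) R)ᶜ, ENNReal.ofReal (‖z‖ ^ s) ∂μ = ∫⁻ z, g ‖z‖ ∂μ := by
    rw [← lintegral_indicator measurableSet_closedBall.compl]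
    congr 1; ext z
    by_cases hz : z ∈ (closedBall (0:E) R)ᶜ
    · rw [Set.indicator_of_mem hz, hgdef, Set.indicator_of_mem
        (by simpa [mem_closedBall_zero_iff, not_le] using hz)]
    · rw [Set.indicator_of_notMem hz, hgdef, Set.indicator_of_notMem
        (by simpa [mem_closedBall_zero_iff, not_lt] using hz)]
  rw [h1, lintegral_fun_norm_addHaar μ g hgm]
  refine ENNReal.mul_lt_top (measure_lt_top _ _) ?_
  have h2 : ∫⁻ y in Ioi (0:ℝ), ENNReal.ofReal (y ^ (dim E - 1)) * g y
      = ∫⁻ y in Ioi R, ENNReal.ofReal (y ^ ((dim E - 1 : ℝ) + s)) := by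
    rw [← lintegral_indicator measurableSet_Ioi, ← lintegral_indicator measurableSet_Ioi]
    congr 1; ext y
    by_cases hy : y ∈ Ioi R
    · have hy0 : (0:ℝ) < y := hR.trans hy
      rw [Set.indicator_of_mem hy, Set.indicator_of_mem (mem_Ioi.2 hy0), hgdef,
        Set.indicator_of_mem hy, ← ENNReal.ofReal_mul (pow_nonneg hy0.le _)]
      congr 1
      rw [Real.rpow_add hy0, ← Real.rpow_natCast y (dim E - 1),
        Nat.cast_sub (by omega : 1 ≤ dim E), Nat.cast_one]
    · by_cases hy0 : y ∈ Ioi (0:ℝ)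
      · rw [Set.indicator_of_notMem hy, Set.indicator_of_mem hy0, hgdef,
          Set.indicator_of_notMem hy, mul_zero]
      · rw [Set.indicator_of_notMem hy, Set.indicator_of_notMem hy0]
  rw [h2]
  have hI : IntegrableOn (fun y : ℝ => y ^ ((dim E - 1 : ℝ) + s)) (Ioi R) :=
    integrableOn_Ioi_rpow_of_lt (by push_cast; linarith) hR
  calc ∫⁻ y in Ioi R, ENNReal.ofReal (y ^ ((dim E - 1 : ℝ) + s))
      ≤ ∫⁻ y in Ioi R, ‖y ^ ((dim E - 1 : ℝ) + s)‖ₑ :=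
        lintegral_ofReal_le_lintegral_enorm _
    _ < ⊤ := hI.2

end Aux

theorem stmt12 (n : ℕ) (hn : 3 ≤ n) (α p : ℝ) (hα : 0 < α) (hαn : α < n)
    (hp : 0 < p) (h1 : (n - α) * p < n) (h2 : (n - α) * (p + 1) > n)
    (e : EuclideanSpace ℝ (Fin n)) (he : ‖e‖ = 1) :
    ∫⁻ z, ENNReal.ofReal (‖z‖ ^ (-(n - α) * p) * ‖e - z‖ ^ (α - n)) < ⊤ := by
  have hne : e ≠ 0 := by intro h; rw [h] at he; simp at he
  haveI : Nontrivial (EuclideanSpace ℝ (Fin n)) := nontrivial_of_ne e 0 hne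
  have hdim : (dim (EuclideanSpace ℝ (Fin n)) : ℝ) = n := by
    rw [finrank_euclideanSpace_fin]
  set s1 : ℝ := -(↑n - α) * p with hs1def
  set s2 : ℝ := α - ↑n with hs2def
  have hb0 : (0:ℝ) < ↑n - α := by linarith
  have hs1neg : s1 < 0 := by
    rw [hs1def]; nlinarith
  have hs1n : -(n:ℝ) < s1 := by rw [hs1def]; nlinarith
  have hs2n : -(n:ℝ) < s2 := by rw [hs2def]; linarith
  have hs2neg : s2 < 0 := by rw [hs2def]; linarith
  have hsum : s1 + s2 < -(n:ℝ) := by rw [hs1def, hs2def]; nlinarith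
  let E := EuclideanSpace ℝ (Fin n)
  set F : E → ℝ≥0∞ := fun z => ENNReal.ofReal (‖z‖ ^ s1 * ‖e - z‖ ^ s2) with hFdef
  set S1 : Set E := ball (0:E) (1/2)
  set S2 : Set E := ball e (1/2)
  set T : Set E := closedBall (0:E) 2 \ (S1 ∪ S2) with hTdef
  set U : Set E := (closedBall (0:E) 2)ᶜ with hUdef
  have hcover : (Set.univ : Set E) ⊆ (S1 ∪ S2 ∪ T) ∪ U := by
    intro z _
    by_cases hz : z ∈ closedBall (0:E) 2
    · by_cases h12 : z ∈ S1 ∪ S2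
      · exact Or.inl (Or.inl h12)
      · exact Or.inl (Or.inr ⟨hz, h12⟩)
    · exact Or.inr hz
  have hmain : ∫⁻ z, F z ≤ (((∫⁻ z in S1, F z) + (∫⁻ z in S2, F z)) + (∫⁻ z in T, F z))
      + ∫⁻ z in U, F z := by
    calc ∫⁻ z, F z = ∫⁻ z in Set.univ, F z := by rw [Measure.restrict_univ]
      _ ≤ ∫⁻ z in (S1 ∪ S2 ∪ T) ∪ U, F z := lintegral_mono_set hcover
      _ ≤ _ := by
          refine (lintegral_union_le _ _ _).trans (add_le_add_left ?_ _)
          refine (lintegral_union_le _ _ _).trans (add_le_add_left ?_ _)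
          exact lintegral_union_le _ _ _
  refine lt_of_le_of_lt hmain ?_
  have half_pos : (0:ℝ) < 1/2 := by norm_num
  -- Piece 1
  have p1 : ∫⁻ z in S1, F z < ⊤ := by
    have hb : ∀ z ∈ S1, F z ≤ ENNReal.ofReal ((1/2:ℝ) ^ s2) * ENNReal.ofReal (‖z‖ ^ s1) := by
      intro z hz
      have h1z : (1/2:ℝ) ≤ ‖e - z‖ := by
        have := norm_sub_norm_le e z
        have hz' : ‖z‖ < 1/2 := mem_ball_zero_iff.1 hz
        linarith [he ▸ this]
      have : ‖e - z‖ ^ s2 ≤ (1/2:ℝ) ^ s2 :=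
        Real.rpow_le_rpow_of_nonpos half_pos h1z hs2neg.le
      calc F z ≤ ENNReal.ofReal (‖z‖ ^ s1 * (1/2:ℝ) ^ s2) :=
            ENNReal.ofReal_le_ofReal
              (mul_le_mul_of_nonneg_left this (Real.rpow_nonneg (norm_nonneg _) _))
        _ = _ := by
            rw [mul_comm, ENNReal.ofReal_mul (Real.rpow_nonneg half_pos.le _)]
    calc ∫⁻ z in S1, F z
        ≤ ∫⁻ z in S1, ENNReal.ofReal ((1/2:ℝ) ^ s2) * ENNReal.ofReal (‖z‖ ^ s1) :=
          setLIntegral_mono (by fun_prop) hb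
      _ = ENNReal.ofReal ((1/2:ℝ) ^ s2) * ∫⁻ z in S1, ENNReal.ofReal (‖z‖ ^ s1) :=
          lintegral_const_mul' _ _ ENNReal.ofReal_ne_top
      _ < ⊤ := ENNReal.mul_lt_top ENNReal.ofReal_lt_top
          (lintegral_rpow_norm_ball_lt_top volume (hdim ▸ hs1n) half_pos)
  -- Piece 2
  have p2 : ∫⁻ z in S2, F z < ⊤ := by
    have hb : ∀ z ∈ S2, F z ≤ ENNReal.ofReal ((1/2:ℝ) ^ s1) * ENNReal.ofReal (‖e - z‖ ^ s2) := by
      intro z hz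
      have hez : ‖e - z‖ < 1/2 := by
        have := mem_ball.1 hz
        rwa [dist_eq_norm, ← norm_sub_rev] at this
      have h1z : (1/2:ℝ) ≤ ‖z‖ := by
        have := norm_sub_norm_le e z
        linarith [he ▸ this]
      have : ‖z‖ ^ s1 ≤ (1/2:ℝ) ^ s1 :=
        Real.rpow_le_rpow_of_nonpos half_pos h1z hs1neg.le
      calc F z ≤ ENNReal.ofReal ((1/2:ℝ) ^ s1 * ‖e - z‖ ^ s2) :=
            ENNReal.ofReal_le_ofReal
              (mul_le_mul_of_nonneg_right this (Real.rpow_nonneg (norm_nonneg _) _))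
        _ = _ := ENNReal.ofReal_mul (Real.rpow_nonneg half_pos.le _)
    have hchg : ∫⁻ z in S2, ENNReal.ofReal (‖e - z‖ ^ s2)
        = ∫⁻ w in ball (0:E) (1/2), ENNReal.ofReal (‖w‖ ^ s2) := by
      have hmp : MeasurePreserving (fun z : E => e - z) volume volume :=
        measurePreserving_sub_left volume e
      have hpre : (fun z : E => e - z) ⁻¹' (ball (0:E) (1/2)) = S2 := by
        ext z
        simp [S2, Set.mem_preimage, mem_ball_zero_iff, mem_ball, dist_eq_norm, norm_sub_rev]
        rw [dist_eq_norm, norm_sub_rev]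
      rw [← hpre]
      have hfm : Measurable fun w : E => ENNReal.ofReal (‖w‖ ^ s2) := by fun_prop
      exact hmp.setLIntegral_comp_preimage measurableSet_ball hfm
    calc ∫⁻ z in S2, F z
        ≤ ∫⁻ z in S2, ENNReal.ofReal ((1/2:ℝ) ^ s1) * ENNReal.ofReal (‖e - z‖ ^ s2) :=
          setLIntegral_mono (by fun_prop) hb
      _ = ENNReal.ofReal ((1/2:ℝ) ^ s1) * ∫⁻ z in S2, ENNReal.ofReal (‖e - z‖ ^ s2) :=
          lintegral_const_mul' _ _ ENNReal.ofReal_ne_top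
      _ < ⊤ := by
          rw [hchg]
          exact ENNReal.mul_lt_top ENNReal.ofReal_lt_top
            (lintegral_rpow_norm_ball_lt_top volume (hdim ▸ hs2n) half_pos)
  -- Piece 3
  have p3 : ∫⁻ z in T, F z < ⊤ := by
    have hb : ∀ z ∈ T, F z ≤ ENNReal.ofReal ((1/2:ℝ) ^ s1 * (1/2:ℝ) ^ s2) := by
      intro z hz
      obtain ⟨-, hz2⟩ := hz
      rw [Set.mem_union, not_or] at hz2
      have hz1 : (1/2:ℝ) ≤ ‖z‖ := by
        have := hz2.1
        simpa [S1, mem_ball_zero_iff, not_lt] using this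
      have hze : (1/2:ℝ) ≤ ‖e - z‖ := by
        have := hz2.2
        simp only [S2, mem_ball, not_lt] at this
        rwa [dist_eq_norm, ← norm_sub_rev] at this
      exact ENNReal.ofReal_le_ofReal <|
        mul_le_mul (Real.rpow_le_rpow_of_nonpos half_pos hz1 hs1neg.le)
          (Real.rpow_le_rpow_of_nonpos half_pos hze hs2neg.le)
          (Real.rpow_nonneg (norm_nonneg _) _) (Real.rpow_nonneg half_pos.le _)
    calc ∫⁻ z in T, F z ≤ ∫⁻ _ in T, ENNReal.ofReal ((1/2:ℝ) ^ s1 * (1/2:ℝ) ^ s2) :=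
          setLIntegral_mono measurable_const hb
      _ = ENNReal.ofReal ((1/2:ℝ) ^ s1 * (1/2:ℝ) ^ s2) * volume T := by
          rw [setLIntegral_const]
      _ < ⊤ := ENNReal.mul_lt_top ENNReal.ofReal_lt_top <|
          lt_of_le_of_lt (measure_mono (Set.diff_subset)) measure_closedBall_lt_top
  -- Piece 4
  have p4 : ∫⁻ z in U, F z < ⊤ := by
    have hb : ∀ z ∈ U, F z ≤ ENNReal.ofReal ((2:ℝ) ^ (-s2)) * ENNReal.ofReal (‖z‖ ^ (s1 + s2)) := by
      intro z hz
      have hz2 : (2:ℝ) < ‖z‖ := by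
        simpa [U, mem_closedBall_zero_iff, not_le] using hz
      have hz0 : (0:ℝ) < ‖z‖ := by linarith
      have hez : ‖z‖ / 2 ≤ ‖e - z‖ := by
        have h := norm_sub_norm_le z e
        rw [norm_sub_rev] at h
        rw [he] at h
        linarith
      have hb1 : ‖e - z‖ ^ s2 ≤ (‖z‖ / 2) ^ s2 :=
        Real.rpow_le_rpow_of_nonpos (by linarith) hez hs2neg.le
      have hb2 : (‖z‖ / 2) ^ s2 = ‖z‖ ^ s2 * (2:ℝ) ^ (-s2) := by
        rw [Real.div_rpow (norm_nonneg _) (by norm_num), Real.rpow_neg (by norm_num)]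
        ring
      calc F z ≤ ENNReal.ofReal (‖z‖ ^ s1 * (‖z‖ ^ s2 * (2:ℝ) ^ (-s2))) := by
            refine ENNReal.ofReal_le_ofReal ?_
            rw [← hb2]
            exact mul_le_mul_of_nonneg_left hb1 (Real.rpow_nonneg (norm_nonneg _) _)
        _ = _ := by
            rw [← mul_assoc, ← Real.rpow_add hz0, mul_comm,
              ENNReal.ofReal_mul (Real.rpow_nonneg (by norm_num) _)]
    calc ∫⁻ z in U, F z
        ≤ ∫⁻ z in U, ENNReal.ofReal ((2:ℝ) ^ (-s2)) * ENNReal.ofReal (‖z‖ ^ (s1 + s2)) :=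
          setLIntegral_mono (by fun_prop) hb
      _ = ENNReal.ofReal ((2:ℝ) ^ (-s2)) * ∫⁻ z in U, ENNReal.ofReal (‖z‖ ^ (s1 + s2)) :=
          lintegral_const_mul' _ _ ENNReal.ofReal_ne_top
      _ < ⊤ := ENNReal.mul_lt_top ENNReal.ofReal_lt_top
          (lintegral_rpow_norm_compl_lt_top volume (hdim ▸ hsum) (by norm_num))
  exact ENNReal.add_lt_top.2 ⟨ENNReal.add_lt_top.2 ⟨ENNReal.add_lt_top.2 ⟨p1, p2⟩, p3⟩, p4⟩
end
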